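/- arXiv:1601.06135 — 2 statements merged into one kernel-verified Lean document; each statement's English description precedes it below -/
import Mathlib

section
/- Let n be a positive integer, let 1 ≤ p ≤ ∞ and 1 ≤ q ≤ ∞ with p ≤ q' (q' the conjugate exponent of q), and define r by 1/r = 1/p − 1/q'. Let f ∈ L^p(ℝⁿ), let F be its Bargmann transform restricted to ℝⁿ, and let g(u) = (4/π)^{n/4}·e^{−‖u‖²/2}. Then ‖π^{−n/2}·F(z)·e^{−‖z‖²/2}‖_{L^r(ℝⁿ, dz)} ≤ (1/(2^{n/(2r)}·π^{n/2}))·‖f‖_{L^p(ℝⁿ)}·‖g‖_{L^q(ℝⁿ)}. -/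
open MeasureTheory ENNReal Real

/-- The Bargmann kernel on `ℝⁿ × ℝⁿ`. -/
noncomputable def bargmannKernel (n : ℕ) (z ζ : EuclideanSpace ℝ (Fin n)) : ℝ :=
  Real.pi ^ (-(n : ℝ) / 4) *
    Real.exp (-(‖z‖ ^ 2 + ‖ζ‖ ^ 2) / 2 + Real.sqrt 2 * (inner ℝ z ζ : ℝ))

/-- The Bargmann transform of `f`, restricted to real arguments. -/
noncomputable def bargmannTransform (n : ℕ) (f : EuclideanSpace ℝ (Fin n) → ℝ)
    (z : EuclideanSpace ℝ (Fin n)) : ℝ :=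
  ∫ ζ, f ζ * bargmannKernel n z ζ

section Helpers

lemma ennnorm_eq_ofReal_aux {x : ℝ} (hx : 0 ≤ x) : (‖x‖₊ : ℝ≥0∞) = ENNReal.ofReal x :=
  Real.enorm_eq_ofReal hx


lemma pt_split (x y : ℝ≥0∞) {p q r : ℝ} (hp : 0 < p) (hq : 0 < q) (hr : 0 < r)
    (hpr : 1/r ≤ 1/p) (hqr : 1/r ≤ 1/q) :
    x * y = (x ^ p * y ^ q) ^ (1/r) * ((x ^ p) ^ (1/p - 1/r) * (y ^ q) ^ (1/q - 1/r)) := by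
  rw [ENNReal.mul_rpow_of_nonneg _ _ (by positivity : (0:ℝ) ≤ 1/r)]
  have hx : (x ^ p) ^ (1/r) * (x ^ p) ^ (1/p - 1/r) = x := by
    rw [← ENNReal.rpow_add_of_nonneg _ _ (by positivity) (by linarith),
      show 1/r + (1/p - 1/r) = 1/p by ring, ← ENNReal.rpow_mul,
      mul_one_div_cancel hp.ne', ENNReal.rpow_one]
  have hy : (y ^ q) ^ (1/r) * (y ^ q) ^ (1/q - 1/r) = y := by
    rw [← ENNReal.rpow_add_of_nonneg _ _ (by positivity) (by linarith),
      show 1/r + (1/q - 1/r) = 1/q by ring, ← ENNReal.rpow_mul,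
      mul_one_div_cancel hq.ne', ENNReal.rpow_one]
  calc x * y = ((x ^ p) ^ (1/r) * (x ^ p) ^ (1/p - 1/r)) *
      ((y ^ q) ^ (1/r) * (y ^ q) ^ (1/q - 1/r)) := by rw [hx, hy]
    _ = _ := by ring

lemma young_core {α : Type*} [MeasurableSpace α] {μ : Measure α} [SigmaFinite μ]
    {φ : α → ℝ≥0∞} (hφ : Measurable φ) {K : α → α → ℝ≥0∞}
    (hK : Measurable (Function.uncurry K))
    {p q r : ℝ} (hp : 1 ≤ p) (hq : 1 ≤ q) (hr : 1 ≤ r)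
    (hpqr : 1/p + 1/q = 1 + 1/r)
    {A B : ℝ≥0∞} (hAtop : A ≠ ∞)
    (hA : ∀ z, ∫⁻ ζ, K z ζ ^ q ∂μ ≤ A)
    (hB : ∀ ζ, ∫⁻ z, K z ζ ^ q ∂μ ≤ B) :
    ∫⁻ z, (∫⁻ ζ, φ ζ * K z ζ ∂μ) ^ r ∂μ ≤
      A ^ (r/q - 1) * B * (∫⁻ x, φ x ^ p ∂μ) ^ (r/p) := by
  have hp0 : 0 < p := lt_of_lt_of_le one_pos hp
  have hq0 : 0 < q := lt_of_lt_of_le one_pos hq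
  have hr0 : 0 < r := lt_of_lt_of_le one_pos hr
  have hpr : 1/r ≤ 1/p := by
    have h1q : 1/q ≤ 1 := by rw [div_le_one hq0]; exact hq
    linarith
  have hqr : 1/r ≤ 1/q := by
    have h1p : 1/p ≤ 1 := by rw [div_le_one hp0]; exact hp
    linarith
  have hpr' : r⁻¹ ≤ p⁻¹ := by rw [← one_div, ← one_div]; exact hpr
  have hqr' : r⁻¹ ≤ q⁻¹ := by rw [← one_div, ← one_div]; exact hqr
  have hrp1 : 1 ≤ r / p := by
    rw [le_div_iff₀ hp0, one_mul]
    rwa [div_le_div_iff₀ hr0 hp0, one_mul, one_mul] at hpr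
  set S := ∫⁻ x, φ x ^ p ∂μ with hS
  -- trivial cases : A = 0 or B = 0
  by_cases hA0 : A = 0
  · have hz : ∀ z, (∫⁻ ζ, φ ζ * K z ζ ∂μ) = 0 := by
      intro z
      have h0 : ∫⁻ ζ, K z ζ ^ q ∂μ = 0 := le_antisymm (hA0 ▸ hA z) zero_le
      rw [lintegral_eq_zero_iff (hK.of_uncurry_left.pow_const _)] at h0
      rw [lintegral_eq_zero_iff (f := fun ζ => φ ζ * K z ζ) (hφ.mul hK.of_uncurry_left)]
      filter_upwards [h0] with ζ hζ
      have : K z ζ = 0 := by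
        by_contra hne
        simp only [Pi.zero_apply] at hζ
        exact hne ((ENNReal.rpow_eq_zero_iff.mp hζ).elim
          (fun h => h.1) (fun h => absurd h.2 (not_lt.mpr hq0.le)))
      simp [this]
    simp only [hz, ENNReal.zero_rpow_of_pos hr0, lintegral_zero]
    exact zero_le
  by_cases hB0 : B = 0
  · have hprod : ∫⁻ z, (∫⁻ ζ, K z ζ ^ q ∂μ) ∂μ = 0 := by
      rw [lintegral_lintegral_swap (hK.pow_const q).aemeasurable]
      have : ∀ ζ, ∫⁻ z, K z ζ ^ q ∂μ = 0 :=
        fun ζ => le_antisymm (hB0 ▸ hB ζ) zero_le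
      simp [this]
    have hm : Measurable fun z => ∫⁻ ζ, K z ζ ^ q ∂μ :=
      Measurable.lintegral_prod_right (f := fun z ζ => K z ζ ^ q) (hK.pow_const q)
    rw [lintegral_eq_zero_iff hm] at hprod
    have hz : ∀ᵐ z ∂μ, (∫⁻ ζ, φ ζ * K z ζ ∂μ) ^ r = 0 := by
      filter_upwards [hprod] with z hz0
      simp only [Pi.zero_apply] at hz0
      rw [lintegral_eq_zero_iff (hK.of_uncurry_left.pow_const _)] at hz0
      have : ∫⁻ ζ, φ ζ * K z ζ ∂μ = 0 := by
        rw [lintegral_eq_zero_iff (f := fun ζ => φ ζ * K z ζ) (hφ.mul hK.of_uncurry_left)]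
        filter_upwards [hz0] with ζ hζ
        have : K z ζ = 0 := by
          by_contra hne
          simp only [Pi.zero_apply] at hζ
          exact hne ((ENNReal.rpow_eq_zero_iff.mp hζ).elim
            (fun h => h.1) (fun h => absurd h.2 (not_lt.mpr hq0.le)))
        simp [this]
      rw [this, ENNReal.zero_rpow_of_pos hr0]
    rw [lintegral_congr_ae hz, lintegral_zero]
    exact zero_le
  -- S = ∞ and w₂ > 0 : RHS = ∞
  by_cases hSw : S = ∞ ∧ 0 < 1/p - 1/r
  · obtain ⟨hSinf, hw2⟩ := hSw
    have : (S : ℝ≥0∞) ^ (r/p) = ∞ := by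
      rw [hSinf]; exact ENNReal.top_rpow_of_pos (by linarith)
    rw [this, ENNReal.mul_top]
    · exact le_top
    · intro h
      rcases mul_eq_zero.mp h with h | h
      · exact hA0 (by
          rcases ENNReal.rpow_eq_zero_iff.mp h with ⟨h1, _⟩ | ⟨h1, h2⟩
          · exact h1
          · exact absurd h1 hAtop)
      · exact hB0 h
  push_neg at hSw
  -- the constant is finite
  have hconst : S ^ (1/p - 1/r) * A ^ (1/q - 1/r) ≠ ∞ := by
    apply ENNReal.mul_ne_top
    · rcases eq_or_ne S ∞ with hSi | hSf
      · have hw2 : 1/p - 1/r = 0 := le_antisymm (hSw hSi) (by linarith)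
        rw [hw2, ENNReal.rpow_zero]; exact one_ne_top
      · exact (ENNReal.rpow_lt_top_of_nonneg (by linarith) hSf).ne
    · exact (ENNReal.rpow_lt_top_of_nonneg (by linarith) hAtop).ne
  have step1 : ∀ z, (∫⁻ ζ, φ ζ * K z ζ ∂μ) ≤
      (∫⁻ ζ, φ ζ ^ p * K z ζ ^ q ∂μ) ^ (1/r) * (S ^ (1/p - 1/r) * A ^ (1/q - 1/r)) := by
    intro z
    have hKz : Measurable (K z) := hK.of_uncurry_left
    have holder := ENNReal.lintegral_prod_norm_pow_le (μ := μ) (Finset.univ : Finset (Fin 3))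
      (f := ![fun ζ => φ ζ ^ p * K z ζ ^ q, fun ζ => φ ζ ^ p, fun ζ => K z ζ ^ q])
      (p := ![1/r, 1/p - 1/r, 1/q - 1/r]) ?_ ?_ ?_
    · calc ∫⁻ ζ, φ ζ * K z ζ ∂μ
          = ∫⁻ ζ, ∏ i, ![fun ζ => φ ζ ^ p * K z ζ ^ q, fun ζ => φ ζ ^ p,
              fun ζ => K z ζ ^ q] i ζ ^ ![1/r, 1/p - 1/r, 1/q - 1/r] i ∂μ := by
            congr 1; funext ζ
            rw [Fin.prod_univ_three]
            simpa [mul_assoc] using pt_split (φ ζ) (K z ζ) hp0 hq0 hr0 hpr hqr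
        _ ≤ ∏ i, (∫⁻ ζ, ![fun ζ => φ ζ ^ p * K z ζ ^ q, fun ζ => φ ζ ^ p,
              fun ζ => K z ζ ^ q] i ζ ∂μ) ^ ![1/r, 1/p - 1/r, 1/q - 1/r] i := holder
        _ ≤ (∫⁻ ζ, φ ζ ^ p * K z ζ ^ q ∂μ) ^ (1/r) * (S ^ (1/p - 1/r) * A ^ (1/q - 1/r)) := by
            rw [Fin.prod_univ_three]
            simp only [Matrix.cons_val_zero, Matrix.cons_val_one, Matrix.head_cons,
              Matrix.cons_val_two, Matrix.tail_cons]
            rw [mul_assoc]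
            exact mul_le_mul_right (mul_le_mul_right
              (ENNReal.rpow_le_rpow (hA z) (by linarith)) _) _
    · intro i _
      fin_cases i
      · exact ((hφ.pow_const _).mul (hKz.pow_const _)).aemeasurable
      · exact (hφ.pow_const _).aemeasurable
      · exact (hKz.pow_const _).aemeasurable
    · rw [Fin.sum_univ_three]
      simp only [Matrix.cons_val_zero, Matrix.cons_val_one, Matrix.head_cons,
        Matrix.cons_val_two, Matrix.tail_cons]
      linarith
    · intro i _
      fin_cases i <;> simp <;> linarith
  calc ∫⁻ z, (∫⁻ ζ, φ ζ * K z ζ ∂μ) ^ r ∂μ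
      ≤ ∫⁻ z, ((∫⁻ ζ, φ ζ ^ p * K z ζ ^ q ∂μ) ^ (1/r) *
          (S ^ (1/p - 1/r) * A ^ (1/q - 1/r))) ^ r ∂μ := by
        exact lintegral_mono fun z => ENNReal.rpow_le_rpow (step1 z) hr0.le
    _ = (S ^ (1/p - 1/r) * A ^ (1/q - 1/r)) ^ r *
          ∫⁻ z, ∫⁻ ζ, φ ζ ^ p * K z ζ ^ q ∂μ ∂μ := by
        rw [← lintegral_const_mul' _ _
          (ENNReal.rpow_lt_top_of_nonneg hr0.le hconst).ne]
        congr 1; funext z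
        rw [ENNReal.mul_rpow_of_nonneg _ _ hr0.le, ← ENNReal.rpow_mul,
          one_div_mul_cancel hr0.ne', ENNReal.rpow_one, mul_comm]
    _ ≤ (S ^ (1/p - 1/r) * A ^ (1/q - 1/r)) ^ r * (S * B) := by
        gcongr
        rw [lintegral_lintegral_swap
          (((hφ.comp measurable_snd).pow_const p).mul (hK.pow_const q)).aemeasurable]
        calc ∫⁻ ζ, ∫⁻ z, φ ζ ^ p * K z ζ ^ q ∂μ ∂μ
            = ∫⁻ ζ, φ ζ ^ p * ∫⁻ z, K z ζ ^ q ∂μ ∂μ := by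
              congr 1; funext ζ
              exact lintegral_const_mul _ ((hK.of_uncurry_right).pow_const _)
          _ ≤ ∫⁻ ζ, φ ζ ^ p * B ∂μ :=
              lintegral_mono fun ζ => mul_le_mul_right (hB ζ) _
          _ = S * B := lintegral_mul_const _ (hφ.pow_const _)
    _ = A ^ (r/q - 1) * B * S ^ (r/p) := by
        rw [ENNReal.mul_rpow_of_nonneg _ _ hr0.le, ← ENNReal.rpow_mul,
          ← ENNReal.rpow_mul]
        have e1 : (1/p - 1/r) * r = r/p - 1 := by field_simp
        have e2 : (1/q - 1/r) * r = r/q - 1 := by field_simp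
        have e3 : S ^ (r/p - 1) * S ^ (1:ℝ) = S ^ (r/p) := by
          rw [← ENNReal.rpow_add_of_nonneg _ _ (by linarith) zero_le_one,
            sub_add_cancel]
        rw [e1, e2, ← e3, ENNReal.rpow_one]; ring

variable {n : ℕ}

lemma gauss_lint (n : ℕ) {b : ℝ} (hb : 0 < b) :
    ∫⁻ v : EuclideanSpace ℝ (Fin n), ENNReal.ofReal (rexp (-(b * ‖v‖^2)))
      = ENNReal.ofReal ((π/b) ^ ((n:ℝ)/2)) := by
  rw [← ofReal_integral_eq_lintegral_ofReal]
  · rw [show (fun v : EuclideanSpace ℝ (Fin n) => rexp (-(b * ‖v‖^2)))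
        = fun v : EuclideanSpace ℝ (Fin n) => rexp (-b * ‖v‖^2) by funext v; ring_nf,
      GaussianFourier.integral_rexp_neg_mul_sq_norm hb, finrank_euclideanSpace_fin]
  · have := (GaussianFourier.integrable_cexp_neg_mul_sq_norm_add
      (show (0:ℝ) < (Complex.ofReal b).re by simpa using hb) 0
      (0 : EuclideanSpace ℝ (Fin n))).norm
    simpa [Complex.norm_exp, ← Complex.ofReal_pow, neg_mul] using this
  · exact Filter.Eventually.of_forall fun x => (Real.exp_pos _).le

lemma gauss_lint_shift (n : ℕ) {b : ℝ} (hb : 0 < b) (w : EuclideanSpace ℝ (Fin n)) :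
    ∫⁻ v : EuclideanSpace ℝ (Fin n), ENNReal.ofReal (rexp (-(b * ‖v - w‖^2)))
      = ENNReal.ofReal ((π/b) ^ ((n:ℝ)/2)) := by
  rw [lintegral_sub_right_eq_self (fun v => ENNReal.ofReal (rexp (-(b * ‖v‖^2)))) w]
  exact gauss_lint n hb

noncomputable def Kk (n : ℕ) (z ζ : EuclideanSpace ℝ (Fin n)) : ℝ≥0∞ :=
  ENNReal.ofReal (rexp (-‖z - (Real.sqrt 2)⁻¹ • ζ‖^2))

lemma Kk_meas : Measurable (Function.uncurry (Kk n)) := by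
  apply ENNReal.measurable_ofReal.comp
  apply (Real.continuous_exp.comp ?_).measurable
  exact (((continuous_fst.sub (continuous_snd.const_smul (Real.sqrt 2)⁻¹)).norm.pow 2)).neg

lemma Kk_rpow (z ζ : EuclideanSpace ℝ (Fin n)) {s : ℝ} (hs : 0 < s) :
    Kk n z ζ ^ s = ENNReal.ofReal (rexp (-(s * ‖z - (Real.sqrt 2)⁻¹ • ζ‖^2))) := by
  rw [Kk, ENNReal.ofReal_rpow_of_pos (Real.exp_pos _), ← Real.exp_mul]
  congr 1
  ring

lemma Kk_row (ζ : EuclideanSpace ℝ (Fin n)) {s : ℝ} (hs : 0 < s) :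
    ∫⁻ z, Kk n z ζ ^ s = ENNReal.ofReal ((π/s) ^ ((n:ℝ)/2)) := by
  simp_rw [Kk_rpow _ _ hs]
  exact gauss_lint_shift n hs _

lemma Kk_col (z : EuclideanSpace ℝ (Fin n)) {s : ℝ} (hs : 0 < s) :
    ∫⁻ ζ, Kk n z ζ ^ s = ENNReal.ofReal ((2*π/s) ^ ((n:ℝ)/2)) := by
  have h2 : (0:ℝ) < Real.sqrt 2 := Real.sqrt_pos.mpr two_pos
  have key : ∀ ζ : EuclideanSpace ℝ (Fin n),
      ‖z - (Real.sqrt 2)⁻¹ • ζ‖^2 = (1/2) * ‖ζ - (Real.sqrt 2) • z‖^2 := by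
    intro ζ
    have : z - (Real.sqrt 2)⁻¹ • ζ = -((Real.sqrt 2)⁻¹ • (ζ - Real.sqrt 2 • z)) := by
      rw [smul_sub, smul_smul, inv_mul_cancel₀ h2.ne', one_smul, neg_sub]
    rw [this, norm_neg, norm_smul, mul_pow, norm_inv, Real.norm_eq_abs, abs_of_pos h2]
    rw [inv_pow, sq_sqrt two_pos.le]
    ring
  simp_rw [Kk_rpow _ _ hs, key, show ∀ x : ℝ, s * ((1/2) * x) = (s/2) * x by intro x; ring]
  rw [gauss_lint_shift n (by positivity : (0:ℝ) < s/2)]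
  congr 2
  rw [div_div_eq_mul_div]
  ring


lemma exp_combine (z ζ : EuclideanSpace ℝ (Fin n)) :
    -(‖z‖ ^ 2 + ‖ζ‖ ^ 2) / 2 + Real.sqrt 2 * (inner ℝ z ζ : ℝ) + (-‖z‖ ^ 2 / 2)
      = -‖z - (Real.sqrt 2)⁻¹ • ζ‖^2 := by
  have h2 : (0:ℝ) < Real.sqrt 2 := Real.sqrt_pos.mpr two_pos
  have hinv : (Real.sqrt 2)⁻¹ = Real.sqrt 2 / 2 := by
    rw [inv_eq_iff_eq_inv]
    field_simp
    exact Real.sq_sqrt two_pos.le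
  have hexp : ‖z - (Real.sqrt 2)⁻¹ • ζ‖^2
      = ‖z‖^2 - 2 * ((Real.sqrt 2)⁻¹ * (inner ℝ z ζ : ℝ)) + (Real.sqrt 2)⁻¹^2 * ‖ζ‖^2 := by
    rw [norm_sub_sq_real z ((Real.sqrt 2)⁻¹ • ζ), real_inner_smul_right,
      norm_smul, mul_pow, norm_inv, Real.norm_eq_abs, abs_of_pos h2]
  rw [hexp, hinv]
  have hs : Real.sqrt 2 ^ 2 = 2 := sq_sqrt two_pos.le
  field_simp
  nlinarith [hs]

lemma pt_bound (f : EuclideanSpace ℝ (Fin n) → ℝ) (z : EuclideanSpace ℝ (Fin n)) :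
    (‖Real.pi ^ (-(n:ℝ)/2) * bargmannTransform n f z * rexp (-‖z‖^2/2)‖₊ : ℝ≥0∞)
      ≤ ENNReal.ofReal (Real.pi ^ (-(n:ℝ)/2) * Real.pi ^ (-(n:ℝ)/4)) *
        ∫⁻ ζ, (‖f ζ‖₊ : ℝ≥0∞) * Kk n z ζ := by
  have hπ : (0:ℝ) < Real.pi := Real.pi_pos
  have hp2 : (0:ℝ) < Real.pi ^ (-(n:ℝ)/2) := Real.rpow_pos_of_pos hπ _
  have hp4 : (0:ℝ) < Real.pi ^ (-(n:ℝ)/4) := Real.rpow_pos_of_pos hπ _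
  have key : ∀ ζ, (‖f ζ * bargmannKernel n z ζ‖₊ : ℝ≥0∞) * ENNReal.ofReal (rexp (-‖z‖^2/2))
      = ENNReal.ofReal (Real.pi ^ (-(n:ℝ)/4)) * ((‖f ζ‖₊ : ℝ≥0∞) * Kk n z ζ) := by
    intro ζ
    rw [nnnorm_mul, ENNReal.coe_mul, bargmannKernel, nnnorm_mul, ENNReal.coe_mul,
      ennnorm_eq_ofReal_aux hp4.le, ennnorm_eq_ofReal_aux (Real.exp_pos _).le,
      Kk, mul_assoc, mul_assoc, ← ENNReal.ofReal_mul (Real.exp_pos _).le,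
      ← Real.exp_add, exp_combine]
    ring
  calc (‖Real.pi ^ (-(n:ℝ)/2) * bargmannTransform n f z * rexp (-‖z‖^2/2)‖₊ : ℝ≥0∞)
      = ENNReal.ofReal (Real.pi ^ (-(n:ℝ)/2)) * (‖bargmannTransform n f z‖₊ : ℝ≥0∞) *
          ENNReal.ofReal (rexp (-‖z‖^2/2)) := by
        rw [nnnorm_mul, nnnorm_mul, ENNReal.coe_mul, ENNReal.coe_mul,
          ennnorm_eq_ofReal_aux hp2.le, ennnorm_eq_ofReal_aux (Real.exp_pos _).le]
    _ ≤ ENNReal.ofReal (Real.pi ^ (-(n:ℝ)/2)) *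
          (∫⁻ ζ, (‖f ζ * bargmannKernel n z ζ‖₊ : ℝ≥0∞)) *
          ENNReal.ofReal (rexp (-‖z‖^2/2)) := by
        gcongr
        exact enorm_integral_le_lintegral_enorm _
    _ = ENNReal.ofReal (Real.pi ^ (-(n:ℝ)/2)) *
          ∫⁻ ζ, (‖f ζ * bargmannKernel n z ζ‖₊ : ℝ≥0∞) * ENNReal.ofReal (rexp (-‖z‖^2/2)) := by
        rw [mul_assoc, lintegral_mul_const' _ _ ENNReal.ofReal_ne_top]
    _ = ENNReal.ofReal (Real.pi ^ (-(n:ℝ)/2)) *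
          ∫⁻ ζ, ENNReal.ofReal (Real.pi ^ (-(n:ℝ)/4)) * ((‖f ζ‖₊ : ℝ≥0∞) * Kk n z ζ) := by
        simp_rw [key]
    _ = ENNReal.ofReal (Real.pi ^ (-(n:ℝ)/2) * Real.pi ^ (-(n:ℝ)/4)) *
          ∫⁻ ζ, (‖f ζ‖₊ : ℝ≥0∞) * Kk n z ζ := by
        rw [lintegral_const_mul' _ _ ENNReal.ofReal_ne_top, ← mul_assoc,
          ← ENNReal.ofReal_mul hp2.le]

lemma two_rpow_combine {a b c : ℝ} : (2:ℝ)^a * (2:ℝ)^b * (2:ℝ)^c = (2:ℝ)^(a+b+c) := by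
  rw [← Real.rpow_add two_pos, ← Real.rpow_add two_pos]

lemma const_cmp (N iq ir qb : ℝ) (hN : 0 ≤ N) (hqb : 0 < qb) (hir : 0 ≤ ir)
    (hiq : ir ≤ iq) :
    π ^ (-N/2) * π ^ (-N/4) * (2*π/qb) ^ ((N/2)*(iq - ir)) * (π/qb) ^ ((N/2)*ir)
    ≤ 1/((2:ℝ) ^ ((N/2)*ir) * π ^ (N/2)) * ((4/π) ^ (N/4) * (2*π/qb) ^ ((N/2)*iq)) := by
  have hπ : (0:ℝ) < π := Real.pi_pos
  have hY : (0:ℝ) < π/qb := by positivity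
  have hsplit : ∀ e : ℝ, (2*π/qb) ^ e = (2:ℝ)^e * (π/qb)^e := by
    intro e
    rw [mul_div_assoc, Real.mul_rpow two_pos.le hY.le]
  have h4 : ((4:ℝ)/π) ^ (N/4) = (2:ℝ)^(N/2) * π^(-(N/4)) := by
    have h44 : (4:ℝ)/π = (2:ℝ)^(2:ℝ) * π^(-(1:ℝ)) := by
      rw [show ((2:ℝ)^(2:ℝ)) = 4 by
        rw [show (2:ℝ) = ((2:ℕ):ℝ) by norm_num, Real.rpow_natCast]; norm_num,
        Real.rpow_neg_one]
      ring
    rw [h44, Real.mul_rpow (by positivity) (by positivity),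
      ← Real.rpow_mul two_pos.le, ← Real.rpow_mul hπ.le]
    ring_nf
  have hone : 1/((2:ℝ) ^ ((N/2)*ir) * π ^ (N/2)) = (2:ℝ)^(-((N/2)*ir)) * π^(-(N/2)) := by
    rw [one_div, mul_inv, ← Real.rpow_neg two_pos.le, ← Real.rpow_neg hπ.le]
  have hYadd : (π/qb) ^ ((N/2)*(iq-ir)) * (π/qb) ^ ((N/2)*ir) = (π/qb) ^ ((N/2)*iq) := by
    rw [← Real.rpow_add hY, show (N/2)*(iq-ir) + (N/2)*ir = (N/2)*iq by ring]
  have e1 : π ^ (-N/2) * π ^ (-N/4) * (2*π/qb) ^ ((N/2)*(iq - ir)) * (π/qb) ^ ((N/2)*ir)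
      = (π ^ (-N/2) * π ^ (-N/4) * (π/qb) ^ ((N/2)*iq)) * (2:ℝ)^((N/2)*(iq-ir)) := by
    rw [hsplit, ← hYadd]; ring
  have e2 : 1/((2:ℝ) ^ ((N/2)*ir) * π ^ (N/2)) * ((4/π) ^ (N/4) * (2*π/qb) ^ ((N/2)*iq))
      = (π ^ (-N/2) * π ^ (-N/4) * (π/qb) ^ ((N/2)*iq)) * (2:ℝ)^((N/2)*(iq-ir) + N/2) := by
    rw [hone, h4, hsplit]
    rw [show (2:ℝ)^(-((N/2)*ir)) * π^(-(N/2)) * ((2:ℝ)^(N/2) * π^(-(N/4)) *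
        ((2:ℝ)^((N/2)*iq) * (π/qb)^((N/2)*iq)))
      = (π^(-(N/2)) * π^(-(N/4)) * (π/qb) ^ ((N/2)*iq)) *
        ((2:ℝ)^(-((N/2)*ir)) * (2:ℝ)^(N/2) * (2:ℝ)^((N/2)*iq)) by ring,
      two_rpow_combine, show -((N/2)*ir) + N/2 + (N/2)*iq = (N/2)*(iq-ir) + N/2 by ring]
    rw [neg_div, neg_div]
  rw [e1, e2]
  apply mul_le_mul_of_nonneg_left _ (by positivity)
  exact Real.rpow_le_rpow_of_exponent_le one_le_two (by linarith)


lemma gaussian_eLpNorm (n : ℕ) {c : ℝ} (hc : 0 < c) {q : ℝ≥0∞} (hq0 : q ≠ 0) (hqt : q ≠ ∞) :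
    eLpNorm (fun u : EuclideanSpace ℝ (Fin n) => c * rexp (-‖u‖^2/2)) q volume
      = ENNReal.ofReal (c * (2*π/q.toReal) ^ ((n:ℝ)/(2*q.toReal))) := by
  set s := q.toReal with hsdef
  have hs : 0 < s := ENNReal.toReal_pos hq0 hqt
  rw [eLpNorm_eq_lintegral_rpow_enorm_toReal hq0 hqt, ← hsdef]
  have key : ∀ u : EuclideanSpace ℝ (Fin n),
      ‖c * rexp (-‖u‖^2/2)‖ₑ ^ s
        = ENNReal.ofReal (c^s) * ENNReal.ofReal (rexp (-((s/2) * ‖u‖^2))) := by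
    intro u
    rw [Real.enorm_eq_ofReal (by positivity),
      ENNReal.ofReal_rpow_of_pos (by positivity),
      Real.mul_rpow hc.le (Real.exp_pos _).le, ← Real.exp_mul,
      ENNReal.ofReal_mul (by positivity)]
    congr 2
    ring
  simp_rw [key]
  rw [lintegral_const_mul' _ _ ENNReal.ofReal_ne_top, gauss_lint n (by positivity : 0 < s/2),
    ← ENNReal.ofReal_mul (by positivity), ENNReal.ofReal_rpow_of_pos (by positivity),
    Real.mul_rpow (by positivity) (by positivity), ← Real.rpow_mul (by positivity),
    ← Real.rpow_mul (by positivity), mul_one_div_cancel hs.ne', Real.rpow_one]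
  congr 3
  · rw [div_div_eq_mul_div]; ring
  · field_simp

lemma four_pi_rpow (N : ℝ) : ((4:ℝ)/π) ^ (N/4) = (2:ℝ)^(N/2) * π^(-(N/4)) := by
  have hπ : (0:ℝ) < π := Real.pi_pos
  have h44 : (4:ℝ)/π = (2:ℝ)^(2:ℝ) * π^(-(1:ℝ)) := by
    rw [show ((2:ℝ)^(2:ℝ)) = 4 by
      rw [show (2:ℝ) = ((2:ℕ):ℝ) by norm_num, Real.rpow_natCast]; norm_num,
      Real.rpow_neg_one]
    ring
  rw [h44, Real.mul_rpow (by positivity) (by positivity),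
    ← Real.rpow_mul two_pos.le, ← Real.rpow_mul hπ.le]
  ring_nf

lemma gauss_essSup_lb (n : ℕ) (hn : 0 < n) :
    ENNReal.ofReal (π ^ (-(n:ℝ)/4)) ≤ eLpNormEssSup
      (fun u : EuclideanSpace ℝ (Fin n) => (4/π) ^ ((n:ℝ)/4) * rexp (-‖u‖^2/2)) volume := by
  have hπ : (0:ℝ) < π := Real.pi_pos
  have hl2 : (0:ℝ) < Real.log 2 := Real.log_pos one_lt_two
  set g : EuclideanSpace ℝ (Fin n) → ℝ := fun u => (4/π) ^ ((n:ℝ)/4) * rexp (-‖u‖^2/2) with hg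
  by_contra hlt
  push_neg at hlt
  have hball : ∀ u ∈ Metric.ball (0 : EuclideanSpace ℝ (Fin n)) (Real.sqrt (Real.log 2)),
      ENNReal.ofReal (π ^ (-(n:ℝ)/4)) ≤ (‖g u‖₊ : ℝ≥0∞) := by
    intro u hu
    have hnorm : ‖u‖^2 ≤ Real.log 2 := by
      have : ‖u‖ < Real.sqrt (Real.log 2) := by simpa using hu
      nlinarith [Real.sq_sqrt hl2.le, norm_nonneg u]
    have hval : π ^ (-(n:ℝ)/4) ≤ g u := by
      rw [hg]
      have h1 : (2:ℝ)^(-((n:ℝ)/2)) ≤ rexp (-‖u‖^2/2) := by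
        rw [Real.rpow_def_of_pos two_pos]
        apply Real.exp_le_exp.mpr
        have hn1 : (1:ℝ) ≤ (n:ℝ) := by exact_mod_cast hn
        nlinarith
      calc π ^ (-(n:ℝ)/4) = ((4:ℝ)/π) ^ ((n:ℝ)/4) * (2:ℝ)^(-((n:ℝ)/2)) := by
            rw [four_pi_rpow]
            rw [show (2:ℝ)^((n:ℝ)/2) * π^(-((n:ℝ)/4)) * (2:ℝ)^(-((n:ℝ)/2))
              = ((2:ℝ)^((n:ℝ)/2) * (2:ℝ)^(-((n:ℝ)/2))) * π^(-((n:ℝ)/4)) by ring,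
              ← Real.rpow_add two_pos, add_neg_cancel, Real.rpow_zero, one_mul, neg_div]
        _ ≤ (4/π) ^ ((n:ℝ)/4) * rexp (-‖u‖^2/2) := by
            apply mul_le_mul_of_nonneg_left h1 (by positivity)
    calc ENNReal.ofReal (π ^ (-(n:ℝ)/4)) ≤ ENNReal.ofReal (g u) := ENNReal.ofReal_le_ofReal hval
      _ = (‖g u‖₊ : ℝ≥0∞) := (ennnorm_eq_ofReal_aux (by positivity)).symm
  have hae : ∀ᵐ u : EuclideanSpace ℝ (Fin n), u ∉ Metric.ball
      (0 : EuclideanSpace ℝ (Fin n)) (Real.sqrt (Real.log 2)) := by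
    filter_upwards [ae_le_eLpNormEssSup (f := g) (μ := volume)] with u hu hub
    exact absurd (lt_of_le_of_lt (le_trans (hball u hub) hu) hlt) (lt_irrefl _)
  rw [ae_iff] at hae
  simp only [not_not] at hae
  have hpos := Metric.measure_ball_pos (μ := (volume : Measure (EuclideanSpace ℝ (Fin n))))
    (0 : EuclideanSpace ℝ (Fin n)) (Real.sqrt_pos.mpr hl2)
  rw [show Metric.ball (0 : EuclideanSpace ℝ (Fin n)) (Real.sqrt (Real.log 2))
    = {u : EuclideanSpace ℝ (Fin n) | u ∈ Metric.ball (0 : EuclideanSpace ℝ (Fin n))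
      (Real.sqrt (Real.log 2))} from rfl] at hpos
  rw [hae] at hpos
  exact absurd hpos (lt_irrefl _)

end Helpers

/-- Young-type inequality for the Bargmann transform restricted to `ℝⁿ`:
`‖π^{-n/2} F(z) e^{-‖z‖²/2}‖_r ≤ 2^{-n/(2r)} π^{-n/2} ‖f‖_p ‖g‖_q` where
`1/r = 1/p - 1/q'` and `g` is the Gaussian `(4/π)^{n/4} e^{-‖u‖²/2}`. -/
theorem statement_12
    (n : ℕ) (hn : 0 < n)
    (p q q' r : ℝ≥0∞) (hp : 1 ≤ p) (hq : 1 ≤ q)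
    (hq' : q⁻¹ + q'⁻¹ = 1) (hpq' : p ≤ q')
    (hr : r⁻¹ = p⁻¹ - q'⁻¹)
    (f : EuclideanSpace ℝ (Fin n) → ℝ) (hf : MemLp f p volume) :
    eLpNorm (fun z : EuclideanSpace ℝ (Fin n) =>
        Real.pi ^ (-(n : ℝ) / 2) * bargmannTransform n f z * Real.exp (-‖z‖ ^ 2 / 2))
      r volume ≤
    ENNReal.ofReal
        (1 / ((2 : ℝ) ^ ((n : ℝ) / (2 * r.toReal)) * Real.pi ^ ((n : ℝ) / 2))) *
      eLpNorm f p volume *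
      eLpNorm (fun u : EuclideanSpace ℝ (Fin n) =>
        (4 / Real.pi) ^ ((n : ℝ) / 4) * Real.exp (-‖u‖ ^ 2 / 2)) q volume := by
  have hπ : (0:ℝ) < π := Real.pi_pos
  have hN : (0:ℝ) ≤ (n:ℝ) := Nat.cast_nonneg n
  -- replace f by a strongly measurable representative
  set f' : EuclideanSpace ℝ (Fin n) → ℝ := (hf.aestronglyMeasurable).mk f with hf'def
  have hf'sm : StronglyMeasurable f' := (hf.aestronglyMeasurable).stronglyMeasurable_mk
  have hff' : f =ᵐ[volume] f' := (hf.aestronglyMeasurable).ae_eq_mk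
  have hBT : bargmannTransform n f = bargmannTransform n f' := by
    funext z
    refine integral_congr_ae (hff'.mono fun ζ h => ?_)
    show f ζ * bargmannKernel n z ζ = f' ζ * bargmannKernel n z ζ
    rw [h]
  rw [hBT, eLpNorm_congr_ae hff']
  set φ : EuclideanSpace ℝ (Fin n) → ℝ≥0∞ := fun ζ => (‖f' ζ‖₊ : ℝ≥0∞) with hφdef
  have hφ : Measurable φ := hf'sm.measurable.nnnorm.coe_nnreal_ennreal
  set C₀ : ℝ≥0∞ := ENNReal.ofReal (π ^ (-(n:ℝ)/2) * π ^ (-(n:ℝ)/4)) with hC₀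
  have hpt : ∀ z, (‖π ^ (-(n:ℝ)/2) * bargmannTransform n f' z * rexp (-‖z‖^2/2)‖₊ : ℝ≥0∞)
      ≤ C₀ * ∫⁻ ζ, φ ζ * Kk n z ζ := fun z => pt_bound f' z
  -- exponent bookkeeping in ℝ≥0∞
  have hp0 : p ≠ 0 := (zero_lt_one.trans_le hp).ne'
  have hq0 : q ≠ 0 := (zero_lt_one.trans_le hq).ne'
  have hqinv_le : q⁻¹ ≤ 1 := ENNReal.inv_le_one.mpr hq
  have hpinv_le : p⁻¹ ≤ 1 := ENNReal.inv_le_one.mpr hp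
  have hqinv_ne : q⁻¹ ≠ ∞ := ne_top_of_le_ne_top one_ne_top hqinv_le
  have hq'inv : q'⁻¹ = 1 - q⁻¹ := by
    rw [← hq', ENNReal.add_sub_cancel_left hqinv_ne]
  have hq'le : q'⁻¹ ≤ p⁻¹ := ENNReal.inv_le_inv.mpr hpq'
  have hsum : r⁻¹ + q'⁻¹ = p⁻¹ := by rw [hr, tsub_add_cancel_of_le hq'le]
  have hrinv_le : r⁻¹ ≤ p⁻¹ := hsum ▸ self_le_add_right _ _
  have hr1 : (1:ℝ≥0∞) ≤ r := ENNReal.inv_le_one.mp (hrinv_le.trans hpinv_le)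
  have hr0 : r ≠ 0 := (zero_lt_one.trans_le hr1).ne'
  have hkey : p⁻¹ + q⁻¹ = 1 + r⁻¹ := by
    rw [← hsum, hq'inv, add_assoc, tsub_add_cancel_of_le hqinv_le, add_comm]
  have hcg : (0:ℝ) < (4/π) ^ ((n:ℝ)/4) := by positivity
  have hπle : π ^ (-(n:ℝ)/4) ≤ (4/π) ^ ((n:ℝ)/4) := by
    rw [four_pi_rpow]
    calc π ^ (-(n:ℝ)/4) = 1 * π ^ (-((n:ℝ)/4)) := by rw [one_mul, neg_div]
      _ ≤ (2:ℝ)^((n:ℝ)/2) * π^(-((n:ℝ)/4)) := by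
          apply mul_le_mul_of_nonneg_right _ (by positivity)
          exact Real.one_le_rpow one_le_two (by positivity)
  by_cases hrtop : r = ∞
  · -- CASE A : r = ∞
    have hrinv0 : r⁻¹ = 0 := by rw [hrtop, ENNReal.inv_top]
    have hrt0 : r.toReal = 0 := by rw [hrtop, ENNReal.toReal_top]
    have hconj : p⁻¹ + q⁻¹ = 1 := by rw [hkey, hrinv0, add_zero]
    have hconst_eq : ENNReal.ofReal (1 / ((2:ℝ) ^ ((n:ℝ)/(2 * r.toReal)) * π ^ ((n:ℝ)/2)))
        = ENNReal.ofReal (π ^ (-(n:ℝ)/2)) := by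
      rw [hrt0, mul_zero, _root_.div_zero, Real.rpow_zero, one_mul, one_div,
        ← Real.rpow_neg hπ.le, neg_div]
    rw [hconst_eq, hrtop, eLpNorm_exponent_top]
    by_cases hqtop : q = ∞
    · -- q = ∞, p = 1
      have hqinv0 : q⁻¹ = 0 := by rw [hqtop, ENNReal.inv_top]
      have hp1 : p = 1 := by
        have h1 : p⁻¹ = 1 := by rw [← hconj, hqinv0, add_zero]
        rwa [ENNReal.inv_eq_one] at h1
      have hTz : ∀ z, (∫⁻ ζ, φ ζ * Kk n z ζ) ≤ ∫⁻ ζ, φ ζ := by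
        intro z
        apply lintegral_mono fun ζ => ?_
        calc φ ζ * Kk n z ζ ≤ φ ζ * 1 := by
              apply mul_le_mul_right
              rw [Kk]
              exact ENNReal.ofReal_le_one.mpr
                (Real.exp_le_one_iff.mpr (neg_nonpos.mpr (by positivity)))
          _ = φ ζ := mul_one _
      have hLHS : eLpNormEssSup (fun z => π ^ (-(n:ℝ)/2) * bargmannTransform n f' z *
          rexp (-‖z‖^2/2)) volume ≤ C₀ * ∫⁻ ζ, φ ζ := by
        unfold eLpNormEssSup
        refine essSup_le_of_ae_le _ ?_
        exact Filter.Eventually.of_forall fun z =>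
          le_trans (hpt z) (mul_le_mul_right (hTz z) _)
      rw [hqtop, eLpNorm_exponent_top]
      calc eLpNormEssSup (fun z => π ^ (-(n:ℝ)/2) * bargmannTransform n f' z *
            rexp (-‖z‖^2/2)) volume
          ≤ C₀ * ∫⁻ ζ, φ ζ := hLHS
        _ = C₀ * eLpNorm f' p volume := by
            rw [hp1, eLpNorm_one_eq_lintegral_enorm]; rfl
        _ ≤ (ENNReal.ofReal (π ^ (-(n:ℝ)/2)) * eLpNormEssSup
              (fun u : EuclideanSpace ℝ (Fin n) =>
                (4/π) ^ ((n:ℝ)/4) * rexp (-‖u‖^2/2)) volume) * eLpNorm f' p volume := by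
            apply mul_le_mul_left
            rw [hC₀, ENNReal.ofReal_mul (by positivity)]
            exact mul_le_mul_right (gauss_essSup_lb n hn) _
        _ = ENNReal.ofReal (π ^ (-(n:ℝ)/2)) * eLpNorm f' p volume * eLpNormEssSup
              (fun u : EuclideanSpace ℝ (Fin n) =>
                (4/π) ^ ((n:ℝ)/4) * rexp (-‖u‖^2/2)) volume := by ring
    · -- q < ∞ in case A
      have hqt : 0 < q.toReal := ENNReal.toReal_pos hq0 hqtop
      set qt := q.toReal with hqtdef
      have hgnorm : eLpNorm (fun u : EuclideanSpace ℝ (Fin n) =>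
          (4 / π) ^ ((n:ℝ)/4) * rexp (-‖u‖^2/2)) q volume
          = ENNReal.ofReal ((4/π) ^ ((n:ℝ)/4) * (2*π/qt) ^ ((n:ℝ)/(2*qt))) :=
        gaussian_eLpNorm n hcg hq0 hqtop
      -- Hölder bound for each z, uniform over the two subcases q = 1 and q > 1
      have hHolder : ∀ z, (∫⁻ ζ, φ ζ * Kk n z ζ) ≤
          eLpNorm f' p volume * ENNReal.ofReal ((2*π/qt) ^ (((n:ℝ)/2) * (1/qt))) := by
        intro z
        have hcol : ∫⁻ ζ, Kk n z ζ ^ qt = ENNReal.ofReal ((2*π/qt) ^ ((n:ℝ)/2)) :=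
          Kk_col z hqt
        by_cases hq1 : q = 1
        · -- p = ∞
          have hqt1 : qt = 1 := by rw [hqtdef, hq1, ENNReal.toReal_one]
          have hptop : p = ∞ := by
            have h1 : q⁻¹ = 1 := by rw [hq1, inv_one]
            have h2 : p⁻¹ = 0 := by
              by_contra hne
              have hlt : (1:ℝ≥0∞) < 1 + p⁻¹ := ENNReal.lt_add_right one_ne_top hne
              have h3 : p⁻¹ + 1 = 1 := h1 ▸ hconj
              rw [add_comm 1 p⁻¹, h3] at hlt
              exact absurd hlt (lt_irrefl _)
            rwa [ENNReal.inv_eq_zero] at h2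
          calc ∫⁻ ζ, φ ζ * Kk n z ζ
              ≤ ∫⁻ ζ, eLpNormEssSup f' volume * Kk n z ζ := by
                apply lintegral_mono_ae
                filter_upwards [ae_le_eLpNormEssSup (f := f') (μ := volume)] with ζ hζ
                exact mul_le_mul_left hζ _
            _ = eLpNormEssSup f' volume * ∫⁻ ζ, Kk n z ζ :=
                lintegral_const_mul _ (Kk_meas.of_uncurry_left)
            _ = eLpNorm f' p volume * ENNReal.ofReal ((2*π/qt) ^ (((n:ℝ)/2) * (1/qt))) := by
                rw [hptop, eLpNorm_exponent_top]
                congr 1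
                rw [show (∫⁻ ζ, Kk n z ζ) = ∫⁻ ζ, Kk n z ζ ^ (1:ℝ) by
                  simp only [ENNReal.rpow_one], show (1:ℝ) = qt by rw [hqt1], hcol]
                congr 1
                rw [hqt1]
                norm_num
        · -- 1 < q < ∞ : conjugate exponents
          have hq1' : (1:ℝ≥0∞) < q := lt_of_le_of_ne hq (Ne.symm hq1)
          have hqt1 : 1 < qt := by
            have := (ENNReal.toReal_lt_toReal one_ne_top hqtop).mpr hq1'
            rwa [ENNReal.toReal_one] at this
          have hpinvpos : p⁻¹ ≠ 0 := by
            intro h0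
            rw [h0, zero_add] at hconj
            exact hq1 (by rwa [ENNReal.inv_eq_one] at hconj)
          have hptop' : p ≠ ∞ := fun h => hpinvpos (by rw [h, ENNReal.inv_top])
          have hpt : 0 < p.toReal := ENNReal.toReal_pos hp0 hptop'
          set pt := p.toReal with hptdef
          have hconjr : pt⁻¹ + qt⁻¹ = 1 := by
            have := congrArg ENNReal.toReal hconj
            rw [ENNReal.toReal_add (ne_top_of_le_ne_top one_ne_top hpinv_le)
              hqinv_ne, ENNReal.toReal_inv, ENNReal.toReal_inv, ENNReal.toReal_one] at this
            exact this
          have hinvlt : pt⁻¹ < 1 := by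
            have h2 : 0 < qt⁻¹ := by positivity
            linarith [hconjr]
          have hpt1 : 1 < pt :=
            calc (1:ℝ) = pt * pt⁻¹ := (mul_inv_cancel₀ hpt.ne').symm
              _ < pt * 1 := by exact mul_lt_mul_of_pos_left hinvlt hpt
              _ = pt := mul_one pt
          have holder := ENNReal.lintegral_mul_le_Lp_mul_Lq volume
            (Real.holderConjugate_iff.mpr ⟨hpt1, hconjr⟩) (f := φ) (g := Kk n z) hφ.aemeasurable
            (Kk_meas.of_uncurry_left).aemeasurable
          calc ∫⁻ ζ, φ ζ * Kk n z ζ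
              ≤ (∫⁻ ζ, φ ζ ^ pt) ^ (1/pt) * (∫⁻ ζ, Kk n z ζ ^ qt) ^ (1/qt) := by
                simpa using holder
            _ = eLpNorm f' p volume * ENNReal.ofReal ((2*π/qt) ^ (((n:ℝ)/2) * (1/qt))) := by
                rw [eLpNorm_eq_lintegral_rpow_enorm_toReal hp0 hptop', hcol,
                  ENNReal.ofReal_rpow_of_pos (by positivity), ← Real.rpow_mul (by positivity)]; rfl
      -- assemble case A with q < ∞
      calc eLpNormEssSup (fun z => π ^ (-(n:ℝ)/2) * bargmannTransform n f' z *
            rexp (-‖z‖^2/2)) volume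
          ≤ C₀ * (eLpNorm f' p volume * ENNReal.ofReal ((2*π/qt) ^ (((n:ℝ)/2) * (1/qt)))) := by
            unfold eLpNormEssSup
            refine essSup_le_of_ae_le _ ?_
            exact Filter.Eventually.of_forall fun z =>
              le_trans (hpt z) (mul_le_mul_right (hHolder z) _)
        _ ≤ ENNReal.ofReal (π ^ (-(n:ℝ)/2)) * eLpNorm f' p volume *
              ENNReal.ofReal ((4/π) ^ ((n:ℝ)/4) * (2*π/qt) ^ ((n:ℝ)/(2*qt))) := by
            rw [hC₀, ENNReal.ofReal_mul (by positivity),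
              show ENNReal.ofReal (π ^ (-(n:ℝ)/2)) * ENNReal.ofReal (π ^ (-(n:ℝ)/4)) *
                (eLpNorm f' p volume * ENNReal.ofReal ((2*π/qt) ^ (((n:ℝ)/2) * (1/qt))))
              = ENNReal.ofReal (π ^ (-(n:ℝ)/2)) * eLpNorm f' p volume *
                (ENNReal.ofReal (π ^ (-(n:ℝ)/4)) *
                  ENNReal.ofReal ((2*π/qt) ^ (((n:ℝ)/2) * (1/qt)))) by ring]
            apply mul_le_mul_right
            rw [← ENNReal.ofReal_mul (by positivity)]
            apply ENNReal.ofReal_le_ofReal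
            have hexp : ((n:ℝ)/2) * (1/qt) = (n:ℝ)/(2*qt) := by
              field_simp
            rw [hexp]
            exact mul_le_mul_of_nonneg_right hπle (by positivity)
        _ = ENNReal.ofReal (π ^ (-(n:ℝ)/2)) * eLpNorm f' p volume *
              eLpNorm (fun u : EuclideanSpace ℝ (Fin n) =>
                (4 / π) ^ ((n:ℝ)/4) * rexp (-‖u‖^2/2)) q volume := by rw [hgnorm]
  · -- MAIN CASE : r < ∞
    have hrinvpos : (0:ℝ≥0∞) < r⁻¹ := ENNReal.inv_pos.mpr hrtop
    have hpinvpos : (0:ℝ≥0∞) < p⁻¹ := lt_of_lt_of_le hrinvpos hrinv_le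
    have hptop : p ≠ ∞ := ENNReal.inv_pos.mp hpinvpos
    have hqtop : q ≠ ∞ := by
      intro hqi
      have hq0' : q⁻¹ = 0 := by rw [hqi, ENNReal.inv_top]
      rw [hq0', add_zero] at hkey
      have : (1:ℝ≥0∞) < 1 + r⁻¹ := ENNReal.lt_add_right one_ne_top hrinvpos.ne'
      rw [← hkey] at this
      exact absurd (lt_of_le_of_lt hpinv_le this) (lt_irrefl _)
    set pt := p.toReal with hptdef
    set qt := q.toReal with hqtdef
    set rt := r.toReal with hrtdef
    have hpt1 : 1 ≤ pt := by
      have := ENNReal.toReal_mono hptop hp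
      rwa [ENNReal.toReal_one] at this
    have hqt1 : 1 ≤ qt := by
      have := ENNReal.toReal_mono hqtop hq
      rwa [ENNReal.toReal_one] at this
    have hrt1 : 1 ≤ rt := by
      have := ENNReal.toReal_mono hrtop hr1
      rwa [ENNReal.toReal_one] at this
    have hpt0 : (0:ℝ) < pt := lt_of_lt_of_le one_pos hpt1
    have hqt0 : (0:ℝ) < qt := lt_of_lt_of_le one_pos hqt1
    have hrt0 : (0:ℝ) < rt := lt_of_lt_of_le one_pos hrt1
    have hreal : 1/pt + 1/qt = 1 + 1/rt := by
      have := congrArg ENNReal.toReal hkey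
      rw [ENNReal.toReal_add (ne_top_of_le_ne_top one_ne_top hpinv_le) hqinv_ne,
        ENNReal.toReal_add one_ne_top (ne_top_of_le_ne_top one_ne_top
          (hrinv_le.trans hpinv_le)), ENNReal.toReal_inv, ENNReal.toReal_inv,
        ENNReal.toReal_inv, ENNReal.toReal_one] at this
      simpa [one_div] using this
    set A : ℝ≥0∞ := ENNReal.ofReal ((2*π/qt) ^ ((n:ℝ)/2)) with hA
    set B : ℝ≥0∞ := ENNReal.ofReal ((π/qt) ^ ((n:ℝ)/2)) with hB
    have young := young_core hφ (Kk_meas (n := n)) hpt1 hqt1 hrt1 hreal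
      (A := A) (B := B) ENNReal.ofReal_ne_top
      (fun z => (Kk_col z hqt0).le) (fun ζ => (Kk_row ζ hqt0).le)
    set S : ℝ≥0∞ := ∫⁻ x, φ x ^ pt with hS
    have hSnorm : S ^ (1/pt) = eLpNorm f' p volume := by
      rw [eLpNorm_eq_lintegral_rpow_enorm_toReal hp0 hptop]; rfl
    rw [eLpNorm_eq_lintegral_rpow_enorm_toReal hr0 hrtop]
    have hstep : (∫⁻ z, (‖π ^ (-(n:ℝ)/2) * bargmannTransform n f' z *
        rexp (-‖z‖^2/2)‖₊ : ℝ≥0∞) ^ rt) ≤ C₀ ^ rt * (A ^ (rt/qt - 1) * B * S ^ (rt/pt)) := by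
      calc (∫⁻ z, (‖π ^ (-(n:ℝ)/2) * bargmannTransform n f' z *
              rexp (-‖z‖^2/2)‖₊ : ℝ≥0∞) ^ rt)
          ≤ ∫⁻ z, (C₀ * ∫⁻ ζ, φ ζ * Kk n z ζ) ^ rt :=
            lintegral_mono fun z => ENNReal.rpow_le_rpow (hpt z) hrt0.le
        _ = C₀ ^ rt * ∫⁻ z, (∫⁻ ζ, φ ζ * Kk n z ζ) ^ rt := by
            simp_rw [ENNReal.mul_rpow_of_nonneg _ _ hrt0.le]
            rw [lintegral_const_mul' _ _
              (ENNReal.rpow_lt_top_of_nonneg hrt0.le ENNReal.ofReal_ne_top).ne]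
        _ ≤ C₀ ^ rt * (A ^ (rt/qt - 1) * B * S ^ (rt/pt)) :=
            mul_le_mul_right young _
    calc (∫⁻ z, (‖π ^ (-(n:ℝ)/2) * bargmannTransform n f' z *
            rexp (-‖z‖^2/2)‖₊ : ℝ≥0∞) ^ rt) ^ (1/rt)
        ≤ (C₀ ^ rt * (A ^ (rt/qt - 1) * B * S ^ (rt/pt))) ^ (1/rt) :=
          ENNReal.rpow_le_rpow hstep (by positivity)
      _ = C₀ * A ^ (1/qt - 1/rt) * B ^ (1/rt) * S ^ (1/pt) := by
          rw [ENNReal.mul_rpow_of_nonneg _ _ (by positivity : (0:ℝ) ≤ 1/rt),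
            ENNReal.mul_rpow_of_nonneg _ _ (by positivity : (0:ℝ) ≤ 1/rt),
            ENNReal.mul_rpow_of_nonneg _ _ (by positivity : (0:ℝ) ≤ 1/rt),
            ← ENNReal.rpow_mul, ← ENNReal.rpow_mul, ← ENNReal.rpow_mul,
            mul_one_div_cancel hrt0.ne', ENNReal.rpow_one,
            show (rt/qt - 1) * (1/rt) = 1/qt - 1/rt by field_simp,
            show (rt/pt) * (1/rt) = 1/pt by field_simp]
          ring
      _ ≤ ENNReal.ofReal (1 / ((2:ℝ) ^ ((n:ℝ)/(2 * rt)) * π ^ ((n:ℝ)/2))) *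
            eLpNorm f' p volume *
            ENNReal.ofReal ((4/π) ^ ((n:ℝ)/4) * (2*π/qt) ^ ((n:ℝ)/(2*qt))) := by
          rw [hSnorm]
          have hLHSc : C₀ * A ^ (1/qt - 1/rt) * B ^ (1/rt)
              = ENNReal.ofReal (π ^ (-(n:ℝ)/2) * π ^ (-(n:ℝ)/4) *
                (2*π/qt) ^ (((n:ℝ)/2) * (1/qt - 1/rt)) * (π/qt) ^ (((n:ℝ)/2) * (1/rt))) := by
            rw [hC₀, hA, hB, ENNReal.ofReal_rpow_of_pos (by positivity),
              ENNReal.ofReal_rpow_of_pos (by positivity),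
              ← Real.rpow_mul (by positivity), ← Real.rpow_mul (by positivity),
              ← ENNReal.ofReal_mul (by positivity), ← ENNReal.ofReal_mul (by positivity)]
          have hRHSc : ENNReal.ofReal (1 / ((2:ℝ) ^ ((n:ℝ)/(2 * rt)) * π ^ ((n:ℝ)/2))) *
              ENNReal.ofReal ((4/π) ^ ((n:ℝ)/4) * (2*π/qt) ^ ((n:ℝ)/(2*qt)))
              = ENNReal.ofReal (1 / ((2:ℝ) ^ (((n:ℝ)/2) * (1/rt)) * π ^ ((n:ℝ)/2)) *
                ((4/π) ^ ((n:ℝ)/4) * (2*π/qt) ^ (((n:ℝ)/2) * (1/qt)))) := by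
            rw [← ENNReal.ofReal_mul (by positivity)]
            rw [show (n:ℝ)/(2*rt) = ((n:ℝ)/2)*(1/rt) by rw [div_mul_div_comm, mul_one],
              show (n:ℝ)/(2*qt) = ((n:ℝ)/2)*(1/qt) by rw [div_mul_div_comm, mul_one]]
          have hcmp := const_cmp (n:ℝ) (1/qt) (1/rt) qt hN hqt0 (by positivity)
            (by
              have h1p : 1/pt ≤ 1 := by
                rw [div_le_one hpt0]; exact hpt1
              linarith)
          calc C₀ * A ^ (1/qt - 1/rt) * B ^ (1/rt) * eLpNorm f' p volume
              = (C₀ * A ^ (1/qt - 1/rt) * B ^ (1/rt)) * eLpNorm f' p volume := by ring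
            _ ≤ (ENNReal.ofReal (1 / ((2:ℝ) ^ ((n:ℝ)/(2 * rt)) * π ^ ((n:ℝ)/2))) *
                  ENNReal.ofReal ((4/π) ^ ((n:ℝ)/4) * (2*π/qt) ^ ((n:ℝ)/(2*qt)))) *
                  eLpNorm f' p volume := by
                apply mul_le_mul_left
                rw [hLHSc, hRHSc]
                exact ENNReal.ofReal_le_ofReal hcmp
            _ = _ := by ring
      _ = ENNReal.ofReal (1 / ((2:ℝ) ^ ((n:ℝ)/(2 * rt)) * π ^ ((n:ℝ)/2))) *
            eLpNorm f' p volume *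
            eLpNorm (fun u : EuclideanSpace ℝ (Fin n) =>
              (4 / π) ^ ((n:ℝ)/4) * rexp (-‖u‖^2/2)) q volume := by
          rw [gaussian_eLpNorm n hcg hq0 hqtop]
end

section
/- For every integer n ≥ 1 and every y > 0: Σ_{k=0}^{n+1} binom(n+1, k)·Ψ_n^{(k)}(y) = 0, where Ψ_n^{(k)} denotes the k-th derivative of the Poisson wavelet Ψ_n on (0,∞). -/
open Polynomial Real

/-- The Poisson wavelet `Ψ_n(y) = ((y-n)/n!)·y^{n-1}·e^{-y}` for `y ≥ 0`, `0` for `y < 0`. -/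
noncomputable def poissonWavelet (n : ℕ) (y : ℝ) : ℝ :=
  if 0 ≤ y then (y - n) / (Nat.factorial n) * y ^ (n - 1) * Real.exp (-y) else 0

noncomputable def pw.D : Module.End ℝ ℝ[X] := Polynomial.derivative

noncomputable abbrev pw.L : Module.End ℝ ℝ[X] := pw.D - 1

lemma pw.deriv_eval_exp (P : ℝ[X]) :
    deriv (fun y => P.eval y * Real.exp (-y))
      = fun y => (pw.L P).eval y * Real.exp (-y) := by
  funext y
  have h1 : HasDerivAt (fun y : ℝ => Real.exp (-y)) (-Real.exp (-y)) y := by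
    simpa [Function.comp_def] using (Real.hasDerivAt_exp (-y)).comp y (hasDerivAt_neg y)
  have h := (P.hasDerivAt y).mul h1
  have : (pw.L P).eval y * Real.exp (-y)
      = (Polynomial.derivative P).eval y * Real.exp (-y) + P.eval y * -Real.exp (-y) := by
    simp [pw.L, pw.D]
    ring
  rw [this]
  exact h.deriv

lemma pw.iter_deriv (P : ℝ[X]) (k : ℕ) :
    deriv^[k] (fun y => P.eval y * Real.exp (-y))
      = fun y => ((pw.L ^ k) P).eval y * Real.exp (-y) := by
  induction k with
  | zero => simp
  | succ k ih =>
      rw [Function.iterate_succ_apply', ih, pw.deriv_eval_exp, pow_succ']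
      simp [Module.End.mul_apply]

lemma pw.eqOn (n : ℕ) (P : ℝ[X])
    (hP : ∀ y : ℝ, 0 < y → P.eval y = (y - n) / (Nat.factorial n) * y ^ (n - 1)) (k : ℕ) :
    ∀ y : ℝ, 0 < y →
      deriv^[k] (poissonWavelet n) y
        = deriv^[k] (fun y => P.eval y * Real.exp (-y)) y := by
  induction k with
  | zero =>
      intro y hy
      simp [poissonWavelet, hy.le, hP y hy]
  | succ k ih =>
      intro y hy
      rw [Function.iterate_succ_apply', Function.iterate_succ_apply']
      apply Filter.EventuallyEq.deriv_eq
      have : Set.Ioi (0:ℝ) ∈ nhds y := isOpen_Ioi.mem_nhds hy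
      filter_upwards [this] with z hz
      exact ih z hz

/-- `∑_{k=0}^{n+1} C(n+1,k)·Ψ_n^{(k)}(y) = 0` for `n ≥ 1`, `y > 0`. -/
theorem statement_16 (n : ℕ) (hn : 1 ≤ n) (y : ℝ) (hy : 0 < y) :
    ∑ k ∈ Finset.range (n + 2),
      ((n + 1).choose k : ℝ) * deriv^[k] (poissonWavelet n) y = 0 := by
  set P : ℝ[X] := Polynomial.C ((Nat.factorial n : ℝ)⁻¹) * (X - Polynomial.C (n:ℝ)) * X ^ (n - 1)
    with hPdef
  have hPeval : ∀ z : ℝ, 0 < z → P.eval z = (z - n) / (Nat.factorial n) * z ^ (n - 1) := by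
    intro z hz
    simp only [hPdef, Polynomial.eval_mul, Polynomial.eval_sub, Polynomial.eval_X,
      Polynomial.eval_C, Polynomial.eval_pow]
    ring
  have hdeg : P.natDegree < n + 1 := by
    have h1 : (Polynomial.C ((Nat.factorial n : ℝ)⁻¹) * (X - Polynomial.C (n:ℝ))).natDegree ≤ 1 := by
      refine le_trans (Polynomial.natDegree_mul_le) ?_
      rw [Polynomial.natDegree_C, Polynomial.natDegree_X_sub_C]
    have h2 : P.natDegree ≤ 1 + (n - 1) := by
      rw [hPdef]
      refine le_trans (Polynomial.natDegree_mul_le) ?_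
      exact add_le_add h1 (Polynomial.natDegree_X_pow_le _)
    omega
  -- rewrite each derivative
  have key : ∀ k, deriv^[k] (poissonWavelet n) y = ((pw.L ^ k) P).eval y * Real.exp (-y) := by
    intro k
    rw [pw.eqOn n P hPeval k y hy, pw.iter_deriv]
  simp only [key]
  have : ∑ k ∈ Finset.range (n + 2),
      ((n + 1).choose k : ℝ) * (((pw.L ^ k) P).eval y * Real.exp (-y))
      = ((∑ k ∈ Finset.range (n + 2), ((n + 1).choose k : ℝ) • (pw.L ^ k)) P).eval y
        * Real.exp (-y) := by
    rw [LinearMap.sum_apply, Polynomial.eval_finset_sum, Finset.sum_mul]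
    congr 1; funext k
    simp [mul_assoc]
  rw [this]
  have hsum : (∑ k ∈ Finset.range (n + 2), ((n + 1).choose k : ℝ) • (pw.L ^ k))
      = pw.D ^ (n + 1) := by
    have hc : Commute pw.L (1 : Module.End ℝ ℝ[X]) := Commute.one_right _
    have hb := hc.add_pow (n + 1)
    have hD : pw.L + 1 = pw.D := by simp [pw.L]
    rw [← hD, hb]
    congr 1; funext k
    rw [one_pow, mul_one]
    rw [Nat.cast_smul_eq_nsmul]
    rw [nsmul_eq_mul, (Nat.cast_commute ((n + 1).choose k) (pw.L ^ k)).eq]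
  rw [hsum]
  have : (pw.D ^ (n + 1)) P = 0 := by
    have := Polynomial.iterate_derivative_eq_zero (p := P) (x := n + 1) hdeg
    rw [Module.End.pow_apply]
    simpa [pw.D] using this
  rw [this]
  simp
end
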